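/- Let A, P ∈ R^{n×n} be symmetric matrices, and suppose P = V R V^T where V ∈ R^{n×d} has orthonormal columns and R ∈ R^{d×d} is symmetric and invertible. Let V̂ ∈ R^{n×d} consist of orthonormal eigenvectors of A associated with its d largest-magnitude eigenvalues, and let Π̂ = V̂V̂^T, Π = VV^T. Then (Davis–Kahan) ‖Π̂ − Π‖_F ≤ 2^{3/2} √d ‖A − P‖ / |λ_min(R)|, provided ‖A − P‖ < |λ_min(R)|/2, where λ_min(R) is the eigenvalue of R of smallest magnitude. -/

import Mathlib

open Matrix

/-- Frobenius norm of a real matrix. -/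
noncomputable def frob {m n : Type*} [Fintype m] [Fintype n] (M : Matrix m n ℝ) : ℝ :=
  Real.sqrt (∑ i, ∑ j, (M i j) ^ 2)

/-- Spectral (ℓ₂ operator) norm of a real matrix. -/
noncomputable def specNorm {m n : Type*} [Fintype m] [Fintype n] [DecidableEq n]
    (M : Matrix m n ℝ) : ℝ :=
  ‖LinearMap.toContinuousLinearMap (Matrix.toEuclideanLin M)‖

namespace DK18

lemma specNorm_nonneg {m n : Type*} [Fintype m] [Fintype n] [DecidableEq n]
    (M : Matrix m n ℝ) : 0 ≤ specNorm M := norm_nonneg _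

lemma specNorm_neg {m n : Type*} [Fintype m] [Fintype n] [DecidableEq n]
    (M : Matrix m n ℝ) : specNorm (-M) = specNorm M := by
  unfold specNorm
  rw [map_neg, map_neg, norm_neg]

lemma mulVec_sq_le {m n : Type*} [Fintype m] [Fintype n] [DecidableEq n]
    (M : Matrix m n ℝ) (x : n → ℝ) :
    ∑ i, (M.mulVec x i)^2 ≤ (specNorm M)^2 * ∑ j, (x j)^2 := by
  set v : EuclideanSpace ℝ n := (WithLp.equiv 2 _).symm x with hv
  have h1 : ‖(LinearMap.toContinuousLinearMap (Matrix.toEuclideanLin M)) v‖ ≤ specNorm M * ‖v‖ :=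
    (LinearMap.toContinuousLinearMap (Matrix.toEuclideanLin M)).le_opNorm v
  have h2 : (LinearMap.toContinuousLinearMap (Matrix.toEuclideanLin M)) v
      = (WithLp.equiv 2 (m → ℝ)).symm (M *ᵥ x) := by
    simp [Matrix.toEuclideanLin_apply, hv]
  rw [h2] at h1
  have hn1 : ‖(WithLp.equiv 2 (m → ℝ)).symm (M *ᵥ x)‖ = Real.sqrt (∑ i, (M.mulVec x i)^2) := by
    rw [EuclideanSpace.norm_eq]; congr 1; apply Finset.sum_congr rfl; intro i _
    simp [Real.norm_eq_abs, sq_abs]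
  have hn2 : ‖v‖ = Real.sqrt (∑ j, (x j)^2) := by
    rw [hv, EuclideanSpace.norm_eq]; congr 1; apply Finset.sum_congr rfl; intro i _
    simp [Real.norm_eq_abs, sq_abs]
  rw [hn1, hn2] at h1
  have hs : 0 ≤ ∑ i, (M.mulVec x i)^2 := Finset.sum_nonneg (fun i _ => sq_nonneg _)
  calc ∑ i, (M.mulVec x i)^2 = (Real.sqrt (∑ i, (M.mulVec x i)^2))^2 := (Real.sq_sqrt hs).symm
    _ ≤ (specNorm M * Real.sqrt (∑ j, (x j)^2))^2 := by
        apply pow_le_pow_left₀ (Real.sqrt_nonneg _) h1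
    _ = (specNorm M)^2 * ∑ j, (x j)^2 := by
        rw [mul_pow, Real.sq_sqrt (Finset.sum_nonneg (fun i _ => sq_nonneg _))]

lemma dot_self_eq_sum_sq {k : Type*} [Fintype k] (y : k → ℝ) : y ⬝ᵥ y = ∑ i, (y i)^2 := by
  simp [dotProduct, sq]

lemma mulVec_dot_mulVec {m k : Type*} [Fintype m] [Fintype k] (B : Matrix m k ℝ) (c : k → ℝ) :
    (B *ᵥ c) ⬝ᵥ (B *ᵥ c) = c ⬝ᵥ ((Bᵀ * B) *ᵥ c) := by
  rw [dotProduct_mulVec (B *ᵥ c) B c, ← mulVec_transpose, mulVec_mulVec, dotProduct_comm]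

/-- sum of squares of entries equals trace (M * Mᵀ) -/
lemma sqF_eq_trace {m n : Type*} [Fintype m] [Fintype n] (M : Matrix m n ℝ) :
    ∑ i, ∑ j, (M i j)^2 = Matrix.trace (M * Mᵀ) := by
  simp [Matrix.trace, Matrix.mul_apply, Matrix.diag, sq]

/-- completeness of the combined orthonormal columns -/
lemma cols_complete {n d p : ℕ} (hdp : d + p = n)
    (Vhat : Matrix (Fin n) (Fin d) ℝ) (Vp : Matrix (Fin n) (Fin p) ℝ)
    (hVhat : Vhatᵀ * Vhat = 1) (hVp : Vpᵀ * Vp = 1) (hperp : Vhatᵀ * Vp = 0) :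
    Vhat * Vhatᵀ + Vp * Vpᵀ = 1 := by
  have hperp' : Vpᵀ * Vhat = 0 := by
    have := congrArg Matrix.transpose hperp
    simpa using this
  have e : Fin n ≃ (Fin d ⊕ Fin p) := (finCongr hdp.symm).trans finSumFinEquiv.symm
  have h1 : fromRows Vhatᵀ Vpᵀ * fromCols Vhat Vp = 1 := by
    rw [fromRows_mul_fromCols, hVhat, hVp, hperp, hperp', fromBlocks_one]
  have h2 : fromCols Vhat Vp * fromRows Vhatᵀ Vpᵀ = 1 :=
    (fromCols_mul_fromRows_eq_one_comm e Vhat Vp Vhatᵀ Vpᵀ).mpr h1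
  rw [fromCols_mul_fromRows] at h2
  exact h2

lemma nu_small {n d p : ℕ}
    (A P : Matrix (Fin n) (Fin n) ℝ)
    (V : Matrix (Fin n) (Fin d) ℝ)
    (R : Matrix (Fin d) (Fin d) ℝ) (hP : P = V * R * Vᵀ)
    (Vhat : Matrix (Fin n) (Fin d) ℝ) (hVhat : Vhatᵀ * Vhat = 1)
    (μ : Fin d → ℝ) (hμ : A * Vhat = Vhat * Matrix.diagonal μ)
    (Vp : Matrix (Fin n) (Fin p) ℝ) (hVp : Vpᵀ * Vp = 1) (hperp : Vhatᵀ * Vp = 0)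
    (ν : Fin p → ℝ) (hν : A * Vp = Vp * Matrix.diagonal ν)
    (htop : ∀ k j, |ν j| ≤ |μ k|) (j : Fin p) :
    |ν j| ≤ specNorm (A - P) := by
  classical
  set Y : Matrix (Fin n) (Fin 1) ℝ := Matrix.of (fun i (_ : Fin 1) => Vp i j) with hY
  set B : Matrix (Fin n) (Fin d ⊕ Fin 1) ℝ := fromCols Vhat Y with hB
  have hY0 : Vhatᵀ * Y = 0 := by
    ext k l
    have := congrFun (congrFun hperp k) j
    simpa [Matrix.mul_apply, hY] using this
  have hY0' : Yᵀ * Vhat = 0 := by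
    have := congrArg Matrix.transpose hY0
    simpa using this
  have hYY : Yᵀ * Y = 1 := by
    ext l l'
    have := congrFun (congrFun hVp j) j
    have hl : l = l' := Subsingleton.elim l l'
    subst hl
    simpa [Matrix.mul_apply, hY, Matrix.one_apply] using this
  have hBtB : Bᵀ * B = 1 := by
    rw [hB, transpose_fromCols, fromRows_mul_fromCols, hVhat, hYY, hY0, hY0',
      fromBlocks_one]
  set w : (Fin d ⊕ Fin 1) → ℝ := Sum.elim μ (fun _ => ν j) with hw
  have hAY : A * Y = Matrix.of (fun i (_ : Fin 1) => Vp i j * ν j) := by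
    ext i l
    have h1 : (A * Vp) i j = (Vp * Matrix.diagonal ν) i j := by rw [hν]
    rw [Matrix.mul_diagonal] at h1
    simpa [Matrix.mul_apply, hY] using h1
  have hAB : A * B = B * Matrix.diagonal w := by
    rw [hB, mul_fromCols, hw, ← Matrix.fromBlocks_diagonal μ (fun _ => ν j),
      fromCols_mul_fromBlocks, hμ, hAY]
    simp only [Matrix.mul_zero, add_zero, zero_add]
    ext i l
    cases l with
    | inl k => rw [fromCols_apply_inl, fromCols_apply_inl]
    | inr l =>
      rw [fromCols_apply_inr, fromCols_apply_inr, Matrix.mul_diagonal]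
      simp [hY]
  -- the singular kernel vector
  set W : Matrix (Fin d) (Fin d ⊕ Fin 1) ℝ := Vᵀ * B with hW
  set M' : Matrix (Fin d ⊕ Fin 1) (Fin d ⊕ Fin 1) ℝ := fromRows W 0 with hM'
  have hdet : M'.det = 0 := by
    apply Matrix.det_eq_zero_of_row_eq_zero (Sum.inr 0)
    intro l; rw [hM', fromRows_apply_inr]; rfl
  obtain ⟨c, hc0, hMc⟩ := (Matrix.exists_mulVec_eq_zero_iff).mpr hdet
  have hWc : W *ᵥ c = 0 := by
    funext k
    have := congrFun hMc (Sum.inl k)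
    simpa [hM', Matrix.mulVec, dotProduct] using this
  set x : Fin n → ℝ := B *ᵥ c with hx
  have hxx : x ⬝ᵥ x = c ⬝ᵥ c := by
    rw [hx, mulVec_dot_mulVec, hBtB, Matrix.one_mulVec]
  have hcpos : 0 < c ⬝ᵥ c := by
    rw [dot_self_eq_sum_sq]
    obtain ⟨l, hl⟩ := Function.ne_iff.mp hc0
    exact Finset.sum_pos' (fun i _ => sq_nonneg _)
      ⟨l, Finset.mem_univ l, lt_of_le_of_ne (sq_nonneg _) (Ne.symm (pow_ne_zero 2 hl))⟩
  have hAx : A *ᵥ x = B *ᵥ (fun l => w l * c l) := by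
    have hdw : Matrix.diagonal w *ᵥ c = fun l => w l * c l :=
      funext fun l => Matrix.mulVec_diagonal w c l
    rw [hx, mulVec_mulVec, hAB, ← mulVec_mulVec, hdw]
  have hAxsq : (A *ᵥ x) ⬝ᵥ (A *ᵥ x) = ∑ l, (w l * c l)^2 := by
    rw [hAx, mulVec_dot_mulVec, hBtB, Matrix.one_mulVec, dot_self_eq_sum_sq]
  have hlow : (ν j)^2 * (c ⬝ᵥ c) ≤ ∑ l, (w l * c l)^2 := by
    rw [dot_self_eq_sum_sq, Finset.mul_sum]
    apply Finset.sum_le_sum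
    intro l _
    rw [mul_pow]
    apply mul_le_mul_of_nonneg_right _ (sq_nonneg _)
    cases l with
    | inl k =>
      have := pow_le_pow_left₀ (abs_nonneg _) (htop k j) 2
      simpa [sq_abs, hw] using this
    | inr l => simp [hw]
  have hPx : P *ᵥ x = 0 := by
    have hVtx : Vᵀ *ᵥ x = 0 := by
      rw [hx, mulVec_mulVec, ← hW, hWc]
    rw [hP, Matrix.mul_assoc, ← mulVec_mulVec, ← mulVec_mulVec, hVtx,
      Matrix.mulVec_zero, Matrix.mulVec_zero]
  have hAPx : (A - P) *ᵥ x = A *ᵥ x := by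
    rw [Matrix.sub_mulVec, hPx, sub_zero]
  have hup : (A *ᵥ x) ⬝ᵥ (A *ᵥ x) ≤ (specNorm (A - P))^2 * (c ⬝ᵥ c) := by
    calc (A *ᵥ x) ⬝ᵥ (A *ᵥ x) = ∑ i, ((A - P) *ᵥ x) i ^ 2 := by
          rw [hAPx, dot_self_eq_sum_sq]
      _ ≤ (specNorm (A - P))^2 * ∑ i, (x i)^2 := mulVec_sq_le _ _
      _ = (specNorm (A - P))^2 * (c ⬝ᵥ c) := by rw [← dot_self_eq_sum_sq, hxx]
  have hfin : (ν j)^2 ≤ (specNorm (A - P))^2 := by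
    have h := le_trans (hlow.trans_eq hAxsq.symm) hup
    exact le_of_mul_le_mul_right (by linarith) hcpos
  calc |ν j| = Real.sqrt ((ν j)^2) := (Real.sqrt_sq_eq_abs _).symm
    _ ≤ Real.sqrt ((specNorm (A - P))^2) := Real.sqrt_le_sqrt hfin
    _ = specNorm (A - P) := Real.sqrt_sq (specNorm_nonneg _)

/-- column bound: projecting `E *ᵥ u` (unit `u`) onto the `Vp` coordinates. -/
lemma col_bound {n d p : ℕ} (E : Matrix (Fin n) (Fin n) ℝ)
    (Vhat : Matrix (Fin n) (Fin d) ℝ) (Vp : Matrix (Fin n) (Fin p) ℝ)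
    (hQ : Vhat * Vhatᵀ + Vp * Vpᵀ = 1) (u : Fin n → ℝ) (hu : ∑ a, (u a)^2 = 1) :
    ∑ j, ((Vpᵀ *ᵥ (E *ᵥ u)) j)^2 ≤ (specNorm E)^2 := by
  set y : Fin n → ℝ := E *ᵥ u with hy
  have h1 : ∑ j, ((Vpᵀ *ᵥ y) j)^2 = y ⬝ᵥ ((Vp * Vpᵀ) *ᵥ y) := by
    rw [← dot_self_eq_sum_sq, mulVec_dot_mulVec, Matrix.transpose_transpose]
  have h2 : 0 ≤ y ⬝ᵥ ((Vhat * Vhatᵀ) *ᵥ y) := by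
    have := mulVec_dot_mulVec Vhatᵀ y
    rw [Matrix.transpose_transpose] at this
    rw [← this, dot_self_eq_sum_sq]
    exact Finset.sum_nonneg (fun i _ => sq_nonneg _)
  have h3 : Vp * Vpᵀ = 1 - Vhat * Vhatᵀ := by
    rw [← hQ]; abel
  have h4 : y ⬝ᵥ ((Vp * Vpᵀ) *ᵥ y) ≤ y ⬝ᵥ y := by
    rw [h3, Matrix.sub_mulVec, Matrix.one_mulVec, dotProduct_sub]
    linarith
  calc ∑ j, ((Vpᵀ *ᵥ y) j)^2 ≤ y ⬝ᵥ y := by rw [h1]; exact h4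
    _ = ∑ i, (E *ᵥ u) i ^ 2 := by rw [hy, dot_self_eq_sum_sq]
    _ ≤ (specNorm E)^2 * ∑ a, (u a)^2 := mulVec_sq_le _ _
    _ = (specNorm E)^2 := by rw [hu, mul_one]

end DK18

open DK18 in
/-- Davis–Kahan: if `P = V R Vᵀ` with `R` symmetric invertible, and `V̂`
consists of orthonormal eigenvectors of the symmetric matrix `A` for its `d`
largest-magnitude eigenvalues, then, provided `‖A − P‖ < |λ_min(R)|/2`,
`‖V̂V̂ᵀ − VVᵀ‖_F ≤ 2^{3/2} √d ‖A − P‖ / |λ_min(R)|`. -/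
theorem stmt18 {n d p : ℕ} (hd : 0 < d) (hdp : d + p = n)
    (A P : Matrix (Fin n) (Fin n) ℝ) (hA : A.IsSymm)
    (V : Matrix (Fin n) (Fin d) ℝ) (hV : Vᵀ * V = 1)
    (R : Matrix (Fin d) (Fin d) ℝ) (hR : R.IsHermitian) (hRunit : IsUnit R)
    (hP : P = V * R * Vᵀ)
    (Vhat : Matrix (Fin n) (Fin d) ℝ) (hVhat : Vhatᵀ * Vhat = 1)
    (μ : Fin d → ℝ) (hμ : A * Vhat = Vhat * Matrix.diagonal μ)
    (Vp : Matrix (Fin n) (Fin p) ℝ) (hVp : Vpᵀ * Vp = 1) (hperp : Vhatᵀ * Vp = 0)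
    (ν : Fin p → ℝ) (hν : A * Vp = Vp * Matrix.diagonal ν)
    (htop : ∀ k j, |ν j| ≤ |μ k|)
    (hgap : specNorm (A - P) < (⨅ i, |hR.eigenvalues i|) / 2) :
    frob (Vhat * Vhatᵀ - V * Vᵀ)
      ≤ 2 ^ ((3 : ℝ) / 2) * Real.sqrt d * specNorm (A - P) / ⨅ i, |hR.eigenvalues i| := by
  classical
  have hne : Nonempty (Fin d) := ⟨⟨0, hd⟩⟩
  set lam : ℝ := ⨅ i, |hR.eigenvalues i| with hlamdef
  set ε : ℝ := specNorm (A - P) with hεdef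
  have hε0 : 0 ≤ ε := specNorm_nonneg _
  have hlam_le : ∀ i, lam ≤ |hR.eigenvalues i| := fun i =>
    ciInf_le (Finite.bddBelow_range _) i
  have hlam_pos : 0 < lam := by
    have hdet : R.det ≠ 0 :=
      isUnit_iff_ne_zero.mp ((Matrix.isUnit_iff_isUnit_det R).mp hRunit)
    have hprod : R.det = ∏ i, hR.eigenvalues i := by
      simpa using hR.det_eq_prod_eigenvalues
    have heig : ∀ i, hR.eigenvalues i ≠ 0 := fun i hi =>
      hdet (by rw [hprod]; exact Finset.prod_eq_zero (Finset.mem_univ i) hi)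
    obtain ⟨i, hi⟩ := exists_eq_ciInf_of_finite (f := fun i => |hR.eigenvalues i|)
    rw [hlamdef, ← hi]
    exact abs_pos.mpr (heig i)
  have hεlam : ε < lam / 2 := hgap
  -- small eigenvalues on the complement
  have hν_small : ∀ j, |ν j| ≤ ε :=
    fun j => nu_small A P V R hP Vhat hVhat μ hμ Vp hVp hperp ν hν htop j
  -- completeness
  have hQ : Vhat * Vhatᵀ + Vp * Vpᵀ = 1 := cols_complete hdp Vhat Vp hVhat hVp hperp
  -- spectral theorem data for R
  set U : Matrix (Fin d) (Fin d) ℝ := (hR.eigenvectorUnitary : Matrix (Fin d) (Fin d) ℝ)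
    with hUdef
  have hstar : star U = Uᵀ := by
    rw [Matrix.star_eq_conjTranspose, Matrix.conjTranspose_eq_transpose_of_trivial]
  have hUtU : Uᵀ * U = 1 := by
    rw [← hstar]; exact Matrix.UnitaryGroup.star_mul_self hR.eigenvectorUnitary
  have hUUt : U * Uᵀ = 1 := mul_eq_one_comm.mp hUtU
  have hdiagid : Matrix.diagonal (RCLike.ofReal ∘ hR.eigenvalues)
      = Matrix.diagonal hR.eigenvalues := by congr 1
  have hRU : R * U = U * Matrix.diagonal hR.eigenvalues := by
    calc R * U = U * Matrix.diagonal hR.eigenvalues * (star U * U) := by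
          conv_lhs => rw [hR.spectral_theorem]
          rw [Unitary.conjStarAlgAut_apply, hdiagid, Matrix.mul_assoc (U * Matrix.diagonal hR.eigenvalues) (star U) U]
      _ = U * Matrix.diagonal hR.eigenvalues := by
          rw [hstar, hUtU, Matrix.mul_one]
  -- the sin-theta matrices
  obtain ⟨S, hSdef⟩ : ∃ S : Matrix (Fin p) (Fin d) ℝ, S = Vpᵀ * V := ⟨_, rfl⟩
  obtain ⟨T, hTdef⟩ : ∃ T : Matrix (Fin p) (Fin d) ℝ, T = S * U := ⟨_, rfl⟩
  obtain ⟨Mx, hMxdef⟩ : ∃ Mx : Matrix (Fin p) (Fin d) ℝ, Mx = Vpᵀ * (P - A) * V * U := ⟨_, rfl⟩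
  have hSR : Vpᵀ * P * V = S * R := by
    rw [hP, hSdef]
    simp only [Matrix.mul_assoc]
    rw [hV, Matrix.mul_one]
  have hAS : Vpᵀ * A * V = Matrix.diagonal ν * S := by
    have h1 : Vpᵀ * A = Matrix.diagonal ν * Vpᵀ := by
      have h := congrArg Matrix.transpose hν
      rw [Matrix.transpose_mul, Matrix.transpose_mul, Matrix.diagonal_transpose, hA.eq] at h
      exact h
    rw [h1, hSdef, Matrix.mul_assoc]
  have hM : Mx = T * Matrix.diagonal hR.eigenvalues - Matrix.diagonal ν * T := by
    have : Vpᵀ * (P - A) * V = S * R - Matrix.diagonal ν * S := by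
      rw [Matrix.mul_sub, Matrix.sub_mul, hSR, hAS]
    rw [hMxdef, this, Matrix.sub_mul, hTdef]
    rw [Matrix.mul_assoc S R U, hRU, ← Matrix.mul_assoc S U _,
      Matrix.mul_assoc (Matrix.diagonal ν) S U]
  -- entrywise relation
  have hMent : ∀ j i, Mx j i = T j i * (hR.eigenvalues i - ν j) := by
    intro j i
    rw [hM, Matrix.sub_apply, Matrix.mul_diagonal, Matrix.diagonal_mul]
    ring
  have hgapji : ∀ i j, lam / 2 ≤ |hR.eigenvalues i - ν j| := by
    intro i j
    have h1 := hlam_le i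
    have h2 := hν_small j
    have h3 := abs_sub_abs_le_abs_sub (hR.eigenvalues i) (ν j)
    linarith
  have hTent : ∀ j i, (lam/2)^2 * (T j i)^2 ≤ (Mx j i)^2 := by
    intro j i
    rw [hMent j i, mul_pow]
    have hsq : (lam/2)^2 ≤ (hR.eigenvalues i - ν j)^2 := by
      have := pow_le_pow_left₀ (by linarith : (0:ℝ) ≤ lam/2) (hgapji i j) 2
      rwa [sq_abs] at this
    nlinarith [sq_nonneg (T j i)]
  -- column bounds
  have hMcol : ∀ i, ∑ j, (Mx j i)^2 ≤ ε^2 := by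
    intro i
    set u : Fin n → ℝ := V *ᵥ (U *ᵥ Pi.single i 1) with hu
    have huu : ∑ a, (u a)^2 = 1 := by
      rw [← dot_self_eq_sum_sq, hu, mulVec_mulVec, mulVec_dot_mulVec]
      have hVU : (V * U)ᵀ * (V * U) = 1 := by
        rw [Matrix.transpose_mul, Matrix.mul_assoc, ← Matrix.mul_assoc Vᵀ V U, hV,
          Matrix.one_mul, hUtU]
      rw [hVU, Matrix.one_mulVec]
      simp [dotProduct, Pi.single_apply]
    have hcol : ∀ j, Mx j i = (Vpᵀ *ᵥ ((P - A) *ᵥ u)) j := by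
      intro j
      have h1 : Mx *ᵥ Pi.single i 1 = Vpᵀ *ᵥ ((P - A) *ᵥ u) := by
        rw [hMxdef, hu, ← mulVec_mulVec, ← mulVec_mulVec, ← mulVec_mulVec]
      have h2 := congrFun h1 j
      rw [Matrix.mulVec_single] at h2
      simpa using h2
    calc ∑ j, (Mx j i)^2 = ∑ j, ((Vpᵀ *ᵥ ((P - A) *ᵥ u)) j)^2 := by
          apply Finset.sum_congr rfl; intro j _; rw [hcol j]
      _ ≤ (specNorm (P - A))^2 := col_bound (P - A) Vhat Vp hQ u huu
      _ = ε^2 := by rw [hεdef, ← specNorm_neg (A - P), neg_sub]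
  have hMsum : ∑ j, ∑ i, (Mx j i)^2 ≤ (d : ℝ) * ε^2 := by
    rw [Finset.sum_comm]
    calc ∑ i : Fin d, ∑ j, (Mx j i)^2 ≤ ∑ _i : Fin d, ε^2 :=
          Finset.sum_le_sum (fun i _ => hMcol i)
      _ = (d:ℝ) * ε^2 := by
          rw [Finset.sum_const, Finset.card_univ, Fintype.card_fin, nsmul_eq_mul]
  have hTsum : (lam/2)^2 * ∑ j, ∑ i, (T j i)^2 ≤ (d:ℝ) * ε^2 := by
    rw [Finset.mul_sum]
    refine le_trans (Finset.sum_le_sum ?_) hMsum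
    intro j _
    rw [Finset.mul_sum]
    exact Finset.sum_le_sum fun i _ => hTent j i
  have hTT : T * Tᵀ = S * Sᵀ := by
    rw [hTdef, Matrix.transpose_mul, Matrix.mul_assoc S U (Uᵀ * Sᵀ),
      ← Matrix.mul_assoc U Uᵀ Sᵀ, hUUt, Matrix.one_mul]
  have hST : ∑ j, ∑ i, (S j i)^2 = ∑ j, ∑ i, (T j i)^2 := by
    rw [sqF_eq_trace, sqF_eq_trace, hTT]
  -- Frobenius identity
  have hfrobid : ∑ a, ∑ b, ((Vhat * Vhatᵀ - V * Vᵀ) a b)^2 = 2 * ∑ j, ∑ i, (S j i)^2 := by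
    rw [sqF_eq_trace, sqF_eq_trace]
    obtain ⟨G, hG⟩ : ∃ G : Matrix (Fin n) (Fin n) ℝ, G = Vhat * Vhatᵀ := ⟨_, rfl⟩
    obtain ⟨H, hH⟩ : ∃ H : Matrix (Fin n) (Fin n) ℝ, H = V * Vᵀ := ⟨_, rfl⟩
    rw [← hG, ← hH]
    have hGt : Gᵀ = G := by rw [hG, Matrix.transpose_mul, Matrix.transpose_transpose]
    have hHt : Hᵀ = H := by rw [hH, Matrix.transpose_mul, Matrix.transpose_transpose]
    have hsub : (G - H)ᵀ = G - H := by rw [Matrix.transpose_sub, hGt, hHt]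
    have htG : Matrix.trace G = (d:ℝ) := by
      rw [hG, Matrix.trace_mul_comm, hVhat, Matrix.trace_one, Fintype.card_fin]
    have htH : Matrix.trace H = (d:ℝ) := by
      rw [hH, Matrix.trace_mul_comm, hV, Matrix.trace_one, Fintype.card_fin]
    have hGG : G * G = G := by
      rw [hG, Matrix.mul_assoc Vhat Vhatᵀ _, ← Matrix.mul_assoc Vhatᵀ Vhat Vhatᵀ, hVhat,
        Matrix.one_mul]
    have hHH : H * H = H := by
      rw [hH, Matrix.mul_assoc V Vᵀ _, ← Matrix.mul_assoc Vᵀ V Vᵀ, hV, Matrix.one_mul]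
    have hGH : Matrix.trace (G * H) = (d:ℝ) - Matrix.trace (S * Sᵀ) := by
      have hG1 : G = 1 - Vp * Vpᵀ := by rw [hG, ← hQ]; abel
      have hVpV : Matrix.trace ((Vp * Vpᵀ) * H) = Matrix.trace (S * Sᵀ) := by
        rw [hH, Matrix.mul_assoc Vp Vpᵀ _, ← Matrix.mul_assoc Vpᵀ V Vᵀ, ← hSdef]
        -- trace (Vp * (S * Vᵀ)) = trace ((S * Vᵀ) * Vp) = trace (S * (Vᵀ * Vp))
        rw [Matrix.trace_mul_comm Vp (S * Vᵀ), Matrix.mul_assoc S Vᵀ Vp]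
        congr 1
        rw [hSdef, Matrix.transpose_mul, Matrix.transpose_transpose]
      rw [hG1, Matrix.sub_mul, Matrix.one_mul, Matrix.trace_sub, htH, hVpV]
    have hexp : (G - H) * (G - H) = G * G - G * H - (H * G - H * H) := by
      rw [Matrix.sub_mul, Matrix.mul_sub, Matrix.mul_sub]
    rw [hsub, hexp, Matrix.trace_sub, Matrix.trace_sub, Matrix.trace_sub, hGG, hHH,
      htG, htH, hGH, Matrix.trace_mul_comm H G, hGH]
    ring
  -- final numerics
  have hRHS0 : (0:ℝ) ≤ 2 ^ ((3 : ℝ) / 2) * Real.sqrt d * ε / lam := by positivity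
  have hpow : ((2:ℝ) ^ ((3:ℝ)/2))^2 = 8 := by
    rw [← Real.rpow_natCast ((2:ℝ) ^ ((3:ℝ)/2)) 2, ← Real.rpow_mul (by norm_num : (0:ℝ) ≤ 2)]
    norm_num
  have hRHSsq : (2 ^ ((3 : ℝ) / 2) * Real.sqrt d * ε / lam)^2
      = 8 * (d:ℝ) * ε^2 / lam^2 := by
    rw [div_pow, mul_pow, mul_pow, hpow, Real.sq_sqrt (Nat.cast_nonneg d)]
  have hkey : ∑ a, ∑ b, ((Vhat * Vhatᵀ - V * Vᵀ) a b)^2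
      ≤ (2 ^ ((3 : ℝ) / 2) * Real.sqrt d * ε / lam)^2 := by
    rw [hfrobid, hST, hRHSsq, le_div_iff₀ (by positivity : (0:ℝ) < lam^2)]
    have h8 : 2 * (∑ j, ∑ i, (T j i)^2) * lam^2
        = 8 * ((lam/2)^2 * ∑ j, ∑ i, (T j i)^2) := by ring
    rw [h8]
    linarith [hTsum]
  calc frob (Vhat * Vhatᵀ - V * Vᵀ)
      = Real.sqrt (∑ a, ∑ b, ((Vhat * Vhatᵀ - V * Vᵀ) a b)^2) := rfl
    _ ≤ Real.sqrt ((2 ^ ((3 : ℝ) / 2) * Real.sqrt d * ε / lam)^2) := Real.sqrt_le_sqrt hkey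
    _ = 2 ^ ((3 : ℝ) / 2) * Real.sqrt d * ε / lam := Real.sqrt_sq hRHS0
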